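/- Let t ≥ 2, r ≥ 2, P a prime, and let (z_1,...,z_t), (z_1',...,z_t') ∈ Z_1 × ... × Z_t be tuples with z_1 + ... + z_t = 𝟙 = z_1' + ... + z_t' as integer vectors. Define the bipartite graph G on left vertices {1,...,t} and right vertices {1,...,t}, with an edge (i,j) whenever z_i and z_j' have a 1-entry in a common position. Then the number of connected components of G is at least 2t − dim span_{F_P}(z_1,...,z_t,z_1',...,z_t'). -/

import Mathlib

theorem stmt12 (t r P : ℕ) (ht : 2 ≤ t) (hr : 2 ≤ r) [Fact P.Prime]
    (z z' : Fin t → Fin r → Fin t → ℕ)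
    (h01 : ∀ i k j, z i k j = 0 ∨ z i k j = 1)
    (h01' : ∀ i k j, z' i k j = 0 ∨ z' i k j = 1)
    (hblock : ∀ i k, ∑ j, z i k j = 1)
    (hblock' : ∀ i k, ∑ j, z' i k j = 1)
    (hZi : ∀ i : Fin t, z i ⟨0, by omega⟩ i = 1)
    (hZi' : ∀ i : Fin t, z' i ⟨0, by omega⟩ i = 1)
    (hsum : ∀ k j, ∑ i, z i k j = 1)
    (hsum' : ∀ k j, ∑ i, z' i k j = 1) :
    2 * t - Module.finrank (ZMod P) (Submodule.span (ZMod P)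
        (Set.range (Sum.elim
          (fun i : Fin t => fun p : Fin r × Fin t => ((z i p.1 p.2 : ℕ) : ZMod P))
          (fun i : Fin t => fun p : Fin r × Fin t => ((z' i p.1 p.2 : ℕ) : ZMod P)))))
      ≤ Nat.card (SimpleGraph.fromRel (fun a b : Fin t ⊕ Fin t =>
          ∃ i j, a = Sum.inl i ∧ b = Sum.inr j ∧
            ∃ p : Fin r × Fin t, z i p.1 p.2 = 1 ∧ z' j p.1 p.2 = 1)).ConnectedComponent := by
  classical
  set f : Fin t ⊕ Fin t → (Fin r × Fin t → ZMod P) := Sum.elim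
      (fun i : Fin t => fun p : Fin r × Fin t => ((z i p.1 p.2 : ℕ) : ZMod P))
      (fun i : Fin t => fun p : Fin r × Fin t => ((z' i p.1 p.2 : ℕ) : ZMod P)) with hf
  set φ := Fintype.linearCombination (ZMod P) f with hφ
  set G := SimpleGraph.fromRel (fun a b : Fin t ⊕ Fin t =>
          ∃ i j, a = Sum.inl i ∧ b = Sum.inr j ∧
            ∃ p : Fin r × Fin t, z i p.1 p.2 = 1 ∧ z' j p.1 p.2 = 1) with hG
  -- uniqueness of the 1-entry
  have huniq : ∀ (k : Fin r) (j0 : Fin t) (i i' : Fin t),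
      z i k j0 = 1 → i' ≠ i → z i' k j0 = 0 := by
    intro k j0 i i' h1 hne
    by_contra h0
    have h1' : 1 ≤ z i' k j0 := Nat.one_le_iff_ne_zero.mpr h0
    have : 2 ≤ ∑ i, z i k j0 := by
      calc 2 = 1 + 1 := rfl
        _ ≤ z i k j0 + z i' k j0 := by omega
        _ = ∑ x ∈ {i, i'}, z x k j0 := by
            rw [Finset.sum_pair (Ne.symm hne)]
        _ ≤ ∑ x, z x k j0 := Finset.sum_le_sum_of_subset (Finset.subset_univ _)
    rw [hsum k j0] at this; omega
  have huniq' : ∀ (k : Fin r) (j0 : Fin t) (i i' : Fin t),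
      z' i k j0 = 1 → i' ≠ i → z' i' k j0 = 0 := by
    intro k j0 i i' h1 hne
    by_contra h0
    have h1' : 1 ≤ z' i' k j0 := Nat.one_le_iff_ne_zero.mpr h0
    have : 2 ≤ ∑ i, z' i k j0 := by
      calc 2 = 1 + 1 := rfl
        _ ≤ z' i k j0 + z' i' k j0 := by omega
        _ = ∑ x ∈ {i, i'}, z' x k j0 := by
            rw [Finset.sum_pair (Ne.symm hne)]
        _ ≤ ∑ x, z' x k j0 := Finset.sum_le_sum_of_subset (Finset.subset_univ _)
    rw [hsum' k j0] at this; omega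
  -- the key computation: for a in the kernel, across an edge, a(inl i) = -a(inr j)
  have hkey : ∀ a ∈ LinearMap.ker φ, ∀ (i j : Fin t) (p : Fin r × Fin t),
      z i p.1 p.2 = 1 → z' j p.1 p.2 = 1 → a (Sum.inl i) = - a (Sum.inr j) := by
    intro a ha i j p hz hz'
    have h0 : φ a p = 0 := by rw [LinearMap.mem_ker.mp ha]; rfl
    rw [hφ, Fintype.linearCombination_apply] at h0
    have h0' : (∑ v : Fin t ⊕ Fin t, a v • f v) p = 0 := h0
    rw [Finset.sum_apply] at h0'
    rw [Fintype.sum_sum_type] at h0'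
    have e1 : ∑ i' : Fin t, (a (Sum.inl i') • f (Sum.inl i')) p = a (Sum.inl i) := by
      rw [Finset.sum_eq_single i]
      · simp [hf, hz]
      · intro i' _ hne
        simp [hf, huniq p.1 p.2 i i' hz hne]
      · simp
    have e2 : ∑ j' : Fin t, (a (Sum.inr j') • f (Sum.inr j')) p = a (Sum.inr j) := by
      rw [Finset.sum_eq_single j]
      · simp [hf, hz']
      · intro j' _ hne
        simp [hf, huniq' p.1 p.2 j j' hz' hne]
      · simp
    rw [e1, e2] at h0'
    exact eq_neg_of_add_eq_zero_left h0'
  -- sign function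
  set ε : Fin t ⊕ Fin t → ZMod P := Sum.elim (fun _ => (1 : ZMod P)) (fun _ => (-1 : ZMod P))
    with hε
  have hεne : ∀ v, ε v ≠ 0 := by
    rintro (i | j) <;> simp [hε]
  -- constancy on components
  have hconst : ∀ a ∈ LinearMap.ker φ, ∀ u v : Fin t ⊕ Fin t, G.Reachable u v →
      ε u * a u = ε v * a v := by
    intro a ha u v huv
    obtain ⟨w⟩ := huv
    induction w with
    | nil => rfl
    | cons hadj w ih =>
      rename_i x y w'
      refine Eq.trans ?_ ih
      rw [hG, SimpleGraph.fromRel_adj] at hadj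
      obtain ⟨-, h | h⟩ := hadj <;>
      · obtain ⟨i, j, hx, hy, p, hz1, hz2⟩ := h
        have := hkey a ha i j p hz1 hz2
        subst hx; subst hy; simp [hε, this]
  -- build the injection from the kernel into functions on components
  have hfin : Finite G.ConnectedComponent := Quot.finite _
  have : Fintype G.ConnectedComponent := Fintype.ofFinite _
  set ψ : LinearMap.ker φ →ₗ[ZMod P] (G.ConnectedComponent → ZMod P) :=
    { toFun := fun a c => ε c.out * a.1 c.out
      map_add' := fun a b => by funext c; simp [mul_add]
      map_smul' := fun m a => by funext c; simp; ring } with hψ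
  have hinj : Function.Injective ψ := by
    rw [injective_iff_map_eq_zero]
    intro a haz
    ext v
    have h1 : ε v * a.1 v = ε (G.connectedComponentMk v).out * a.1 (G.connectedComponentMk v).out := by
      apply hconst a.1 a.2
      exact SimpleGraph.ConnectedComponent.exact (G.connectedComponentMk v).out_eq.symm
    have h2 : ψ a (G.connectedComponentMk v) = 0 := by rw [haz]; rfl
    rw [hψ] at h2
    simp only [LinearMap.coe_mk, AddHom.coe_mk] at h2
    rw [h2] at h1
    rcases mul_eq_zero.mp h1 with h | h
    · exact absurd h (hεne v)
    · exact h
  -- dimension counting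
  have hrank : Module.finrank (ZMod P) (LinearMap.range φ) +
      Module.finrank (ZMod P) (LinearMap.ker φ) = 2 * t := by
    rw [LinearMap.finrank_range_add_finrank_ker φ,
      Module.finrank_fintype_fun_eq_card, Fintype.card_sum, Fintype.card_fin]
    ring
  have hspan : LinearMap.range φ = Submodule.span (ZMod P) (Set.range f) := by
    rw [hφ, Fintype.range_linearCombination]
  have hker_le : Module.finrank (ZMod P) (LinearMap.ker φ) ≤
      Fintype.card G.ConnectedComponent := by
    have := LinearMap.finrank_le_finrank_of_injective hinj
    rwa [Module.finrank_fintype_fun_eq_card] at this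
  rw [← hspan, Nat.card_eq_fintype_card]
  omega
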